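/- For m = 2 and nonnegative integers k_0, k_1, the variety D^n_{(k_0,k_1)} of tuples (X̄_0, X̄_1, Ȳ_0, Ȳ_1, ī_n, j̄_n) with X̄_i ∈ Hom(V_{i+1}, V_i), Ȳ_i ∈ Hom(V_i, V_{i+1}) (indices mod 2), ī_n ∈ V_n, j̄_n ∈ V_n^*, dim V_i = k_i, satisfying X̄_i Ȳ_i − Ȳ_{i-1} X̄_{i-1} + Id = 0 for i ≠ n and X̄_n Ȳ_n − Ȳ_{n-1} X̄_{n-1} + Id = ī_n j̄_n, is nonempty only if k_n − (k_0 − k_1)² ≥ 0. -/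

import Mathlib

open Matrix

namespace Stmt5Aux

section helpers
variable {l m n o o' : Type} [Fintype m]

lemma submul (C : Matrix l m ℂ) (R : Matrix m n ℂ) (f : o → l) (g : o' → n) :
    C.submatrix f id * R.submatrix id g = (C * R).submatrix f g := by
  ext a b; simp [Matrix.mul_apply]

lemma sub_one {ι κ : Type} [DecidableEq ι] [DecidableEq κ] (f : κ → ι)
    (hf : Function.Injective f) : (1 : Matrix ι ι ℂ).submatrix f f = 1 := by
  ext a b
  simp [Matrix.one_apply, hf.eq_iff]

lemma split3 {a b cc n n' : Type} [Fintype a] [Fintype b] [Fintype cc]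
    (R : Matrix n ((a ⊕ b) ⊕ cc) ℂ) (C : Matrix ((a ⊕ b) ⊕ cc) n' ℂ) :
    R * C = R.submatrix id (Sum.inl ∘ Sum.inl) * C.submatrix (Sum.inl ∘ Sum.inl) id
      + R.submatrix id (Sum.inl ∘ Sum.inr) * C.submatrix (Sum.inl ∘ Sum.inr) id
      + R.submatrix id Sum.inr * C.submatrix Sum.inr id := by
  ext x y
  simp [Matrix.mul_apply, Fintype.sum_sum_type]

lemma mul_empty {k k' : ℕ} (A : Matrix (Fin k) (Fin 0) ℂ) (B : Matrix (Fin 0) (Fin k') ℂ) :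
    A * B = 0 := by
  ext a b; simp [Matrix.mul_apply]

end helpers


lemma idem_factor {ι : Type} [Fintype ι] [DecidableEq ι]
    (q : Matrix ι ι ℂ) (hq : q * q = q) :
    ∃ (r : ℕ) (C : Matrix ι (Fin r) ℂ) (R : Matrix (Fin r) ι ℂ),
      R * C = 1 ∧ C * R = q := by
  set W := LinearMap.range q.mulVecLin with hW
  let b : Module.Basis (Fin (Module.finrank ℂ W)) ℂ W := Module.finBasis ℂ W
  have he : ∀ x : ι, q.mulVec (Pi.single x 1) ∈ W := fun x =>
    ⟨Pi.single x 1, q.mulVecLin_apply _⟩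
  let e : ι → W := fun x => ⟨q.mulVec (Pi.single x 1), he x⟩
  have hfix : ∀ w : W, q.mulVec (w : ι → ℂ) = (w : ι → ℂ) := by
    rintro ⟨w, u, rfl⟩
    simp only [mulVecLin_apply]
    rw [mulVec_mulVec, hq]
  have hsum : ∀ w : W, ∑ x, ((w : ι → ℂ) x) • e x = w := by
    intro w
    apply Subtype.ext
    have : ∀ y, (∑ x, ((w : ι → ℂ) x) • e x : W).1 y = ∑ x, ((w : ι → ℂ) x) * q y x := by
      intro y
      rw [AddSubmonoidClass.coe_finset_sum]
      simp only [Finset.sum_apply, SetLike.val_smul, Pi.smul_apply, smul_eq_mul]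
      congr 1; ext x
      congr 1
      simp [e, mulVec, dotProduct, Pi.single_apply]
    funext y
    rw [this y]
    have h2 : q.mulVec (w : ι → ℂ) y = ∑ x, ((w : ι → ℂ) x) * q y x := by
      simp [mulVec, dotProduct, mul_comm]
    rw [← h2, hfix]
  refine ⟨Module.finrank ℂ W,
    Matrix.of (fun x s => (b s : ι → ℂ) x),
    Matrix.of (fun s x => b.repr (e x) s), ?_, ?_⟩
  · ext s t
    simp only [mul_apply, Matrix.of_apply]
    have : ∑ x, b.repr (e x) s * (b t : ι → ℂ) x
        = (b.repr (∑ x, ((b t : ι → ℂ) x) • e x)) s := by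
      rw [map_sum]
      simp only [_root_.map_smul, Finsupp.coe_smul, Pi.smul_apply, smul_eq_mul]
      rw [Finset.sum_apply']
      congr 1; ext x
      simp [Finsupp.smul_apply]; ring
    rw [this, hsum (b t), Module.Basis.repr_self]
    simp [Finsupp.single_apply, one_apply, eq_comm]
  · ext x y
    simp only [mul_apply, Matrix.of_apply]
    have : ∑ s, (b s : ι → ℂ) x * b.repr (e y) s
        = ((∑ s, b.repr (e y) s • b s : W) : ι → ℂ) x := by
      rw [AddSubmonoidClass.coe_finset_sum]
      simp only [Finset.sum_apply, SetLike.val_smul, Pi.smul_apply, smul_eq_mul]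
      congr 1; ext s; ring
    rw [this, b.sum_repr (e y)]
    simp [e, mulVec, dotProduct, Pi.single_apply]


lemma reflect (k0 k1 w0 w1 : ℕ) (l0 l1 : ℤ) (hl0 : (l0:ℂ) ≠ 0)
    (X0 : Matrix (Fin k0) (Fin k1) ℂ) (X1 : Matrix (Fin k1) (Fin k0) ℂ)
    (Y0 : Matrix (Fin k1) (Fin k0) ℂ) (Y1 : Matrix (Fin k0) (Fin k1) ℂ)
    (F0 : Matrix (Fin k0) (Fin w0) ℂ) (G0 : Matrix (Fin w0) (Fin k0) ℂ)
    (F1 : Matrix (Fin k1) (Fin w1) ℂ) (G1 : Matrix (Fin w1) (Fin k1) ℂ)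
    (hE0 : X0 * Y0 - Y1 * X1 + (l0:ℂ) • 1 = F0 * G0)
    (hE1 : X1 * Y1 - Y0 * X0 + (l1:ℂ) • 1 = F1 * G1) :
    ∃ r : ℕ, r + k0 = 2 * k1 + w0 ∧
      ∃ (X0' : Matrix (Fin r) (Fin k1) ℂ) (X1' : Matrix (Fin k1) (Fin r) ℂ)
        (Y0' : Matrix (Fin k1) (Fin r) ℂ) (Y1' : Matrix (Fin r) (Fin k1) ℂ)
        (F0' : Matrix (Fin r) (Fin w0) ℂ) (G0' : Matrix (Fin w0) (Fin r) ℂ),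
        X0' * Y0' - Y1' * X1' + ((-l0 : ℤ):ℂ) • 1 = F0' * G0' ∧
        X1' * Y1' - Y0' * X0' + ((l1 + 2*l0 : ℤ):ℂ) • 1 = F1 * G1 := by
  classical
  set α : Matrix (Fin k0) ((Fin k1 ⊕ Fin k1) ⊕ Fin w0) ℂ :=
    Matrix.of (fun a x => Sum.elim (Sum.elim (fun b => X0 a b) (fun b => -Y1 a b))
      (fun u => -F0 a u) x) with hα
  set β : Matrix ((Fin k1 ⊕ Fin k1) ⊕ Fin w0) (Fin k0) ℂ :=
    Matrix.of (fun x c => Sum.elim (Sum.elim (fun b => Y0 b c) (fun b => X1 b c))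
      (fun u => G0 u c) x) with hβ
  have hαβ : α * β = (-(l0:ℂ)) • 1 := by
    have h1 : α * β = X0 * Y0 - Y1 * X1 - F0 * G0 := by
      ext a b
      rw [Matrix.mul_apply, Fintype.sum_sum_type, Fintype.sum_sum_type]
      simp only [hα, hβ, Matrix.of_apply, Sum.elim_inl, Sum.elim_inr,
        Matrix.sub_apply, Matrix.mul_apply, neg_mul, Finset.sum_neg_distrib]
      ring
    rw [h1, ← hE0, neg_smul]; abel
  set c : ℂ := (-(l0:ℂ))⁻¹ with hcdef
  have hl0' : (-(l0:ℂ)) ≠ 0 := neg_ne_zero.mpr hl0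
  have hc : c * (-(l0:ℂ)) = 1 := inv_mul_cancel₀ hl0'
  have hcl : (l0:ℂ) * c = -1 := by
    have : (-(l0:ℂ)) * c = 1 := by rw [mul_comm]; exact hc
    have h2 : (l0:ℂ) * c = -((-(l0:ℂ)) * c) := by ring
    rw [h2, this]
  set p : Matrix ((Fin k1 ⊕ Fin k1) ⊕ Fin w0) ((Fin k1 ⊕ Fin k1) ⊕ Fin w0) ℂ
    := c • (β * α) with hp
  have hβαβα : (β * α) * (β * α) = (-(l0:ℂ)) • (β * α) := by
    have e1 : (β * α) * (β * α) = β * ((α * β) * α) := by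
      simp only [Matrix.mul_assoc]
    rw [e1, hαβ, Matrix.smul_mul, Matrix.one_mul, Matrix.mul_smul]
  have hpp : p * p = p := by
    rw [hp, Matrix.smul_mul, Matrix.mul_smul, hβαβα, smul_smul, smul_smul,
      mul_assoc, hc, mul_one]
  have hqq : (1 - p) * (1 - p) = 1 - p := by
    have hex : (1 - p) * (1 - p) = 1 - p - p + p * p := by noncomm_ring
    rw [hex, hpp]; abel
  obtain ⟨r, C, R, hRC, hCR⟩ := idem_factor (1 - p) hqq
  have htr : (r : ℂ) + k0 = 2 * k1 + w0 := by
    have t1 : Matrix.trace (R * C) = (r : ℂ) := by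
      rw [hRC, Matrix.trace_one]; simp
    have t2 : Matrix.trace (C * R) = 2 * (k1:ℂ) + w0 - k0 := by
      rw [hCR, Matrix.trace_sub, Matrix.trace_one, hp, Matrix.trace_smul,
        Matrix.trace_mul_comm, hαβ, Matrix.trace_smul, Matrix.trace_one]
      simp only [Fintype.card_sum, Fintype.card_fin, smul_eq_mul]
      push_cast
      rw [← mul_assoc]
      rw [mul_comm c (-(l0:ℂ)), mul_comm ((-(l0:ℂ)) * c) _]
      rw [mul_comm (-(l0:ℂ)) c, hc]
      ring
    rw [Matrix.trace_mul_comm] at t1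
    rw [t1] at t2
    linear_combination t2
  have hrn : r + k0 = 2 * k1 + w0 := by exact_mod_cast htr
  set f1 : Fin k1 → ((Fin k1 ⊕ Fin k1) ⊕ Fin w0) := Sum.inl ∘ Sum.inl with hf1
  set f2 : Fin k1 → ((Fin k1 ⊕ Fin k1) ⊕ Fin w0) := Sum.inl ∘ Sum.inr with hf2
  set f3 : Fin w0 → ((Fin k1 ⊕ Fin k1) ⊕ Fin w0) := Sum.inr with hf3
  have hf1i : Function.Injective f1 := Sum.inl_injective.comp Sum.inl_injective
  have hf2i : Function.Injective f2 := Sum.inl_injective.comp Sum.inr_injective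
  have hβ1 : β.submatrix f1 id = Y0 := by ext a b; simp [hβ, hf1]
  have hβ2 : β.submatrix f2 id = X1 := by ext a b; simp [hβ, hf2]
  have hα1 : α.submatrix id f1 = X0 := by ext a b; simp [hα, hf1]
  have hα2 : α.submatrix id f2 = -Y1 := by ext a b; simp [hα, hf2]
  -- key block identities
  have hC1R1 : (l0:ℂ) • (C.submatrix f1 id * R.submatrix id f1)
      = (l0:ℂ) • (1 : Matrix (Fin k1) (Fin k1) ℂ) + Y0 * X0 := by
    rw [submul, hCR]
    have e1 : (1 - p).submatrix f1 f1
        = 1 - c • (Y0 * X0) := by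
      have e2 : (1 - p).submatrix f1 f1
          = (1 : Matrix _ _ ℂ).submatrix f1 f1 - p.submatrix f1 f1 := by
        ext a b; simp
      rw [e2, sub_one f1 hf1i, hp]
      have e3 : ((c • (β * α)).submatrix f1 f1 : Matrix (Fin k1) (Fin k1) ℂ)
          = c • ((β * α).submatrix f1 f1) := by ext a b; simp
      rw [e3, ← submul, hβ1, hα1]
    rw [e1, smul_sub, smul_smul, hcl, neg_one_smul]
    abel
  have hC2R2 : (l0:ℂ) • (C.submatrix f2 id * R.submatrix id f2)
      = (l0:ℂ) • (1 : Matrix (Fin k1) (Fin k1) ℂ) - X1 * Y1 := by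
    rw [submul, hCR]
    have e1 : (1 - p).submatrix f2 f2
        = 1 - c • (X1 * (-Y1)) := by
      have e2 : (1 - p).submatrix f2 f2
          = (1 : Matrix _ _ ℂ).submatrix f2 f2 - p.submatrix f2 f2 := by
        ext a b; simp
      rw [e2, sub_one f2 hf2i, hp]
      have e3 : ((c • (β * α)).submatrix f2 f2 : Matrix (Fin k1) (Fin k1) ℂ)
          = c • ((β * α).submatrix f2 f2) := by ext a b; simp
      rw [e3, ← submul, hβ2, hα2]
    rw [e1, smul_sub, smul_smul, hcl, neg_one_smul, Matrix.mul_neg]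
    abel
  have hsplit : R.submatrix id f1 * C.submatrix f1 id
      + R.submatrix id f2 * C.submatrix f2 id
      + R.submatrix id f3 * C.submatrix f3 id = 1 := by
    rw [hf1, hf2, hf3, ← split3 R C]
    exact hRC
  refine ⟨r, hrn, (l0:ℂ) • R.submatrix id f1, C.submatrix f2 id, C.submatrix f1 id,
    (-(l0:ℂ)) • R.submatrix id f2, (-(l0:ℂ)) • R.submatrix id f3, C.submatrix f3 id,
    ?_, ?_⟩
  · -- new vertex-0 equation
    have h3 : R.submatrix id f3 * C.submatrix f3 id
        = 1 - R.submatrix id f1 * C.submatrix f1 id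
          - R.submatrix id f2 * C.submatrix f2 id := by
      rw [← hsplit]; abel
    rw [Matrix.smul_mul, Matrix.smul_mul, Matrix.smul_mul, h3]
    push_cast
    module
  · -- new vertex-1 equation
    have g1 : C.submatrix f2 id * ((-(l0:ℂ)) • R.submatrix id f2)
        = -((l0:ℂ) • (C.submatrix f2 id * R.submatrix id f2)) := by
      rw [Matrix.mul_smul, neg_smul]
    have g2 : C.submatrix f1 id * ((l0:ℂ) • R.submatrix id f1)
        = (l0:ℂ) • (C.submatrix f1 id * R.submatrix id f1) := by
      rw [Matrix.mul_smul]
    rw [g1, g2, hC1R1, hC2R2, ← hE1]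
    push_cast
    module


lemma odd_cast_ne_zero {l : ℤ} (h : Odd l) : (l : ℂ) ≠ 0 := by
  have : l ≠ 0 := by rcases h with ⟨t, rfl⟩; omega
  exact_mod_cast Int.cast_ne_zero.mpr this

lemma key : ∀ (m k0 k1 : ℕ), k0 + k1 = m → ∀ (l0 l1 : ℤ), Odd l0 → Odd l1 →
    ∀ (X0 : Matrix (Fin k0) (Fin k1) ℂ) (X1 : Matrix (Fin k1) (Fin k0) ℂ)
      (Y0 : Matrix (Fin k1) (Fin k0) ℂ) (Y1 : Matrix (Fin k0) (Fin k1) ℂ)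
      (F : Matrix (Fin k0) (Fin 1) ℂ) (G : Matrix (Fin 1) (Fin k0) ℂ),
      X0 * Y0 - Y1 * X1 + (l0:ℂ) • 1 = F * G →
      X1 * Y1 - Y0 * X0 + (l1:ℂ) • 1 = 0 →
      ((k0:ℤ) - (k1:ℤ))^2 ≤ (k0:ℤ) := by
  intro m
  induction m using Nat.strong_induction_on with
  | _ m IH =>
  intro k0 k1 hm l0 l1 h0 h1 X0 X1 Y0 Y1 F G hE0 hE1
  have hl0 : (l0:ℂ) ≠ 0 := odd_cast_ne_zero h0
  have hl1 : (l1:ℂ) ≠ 0 := odd_cast_ne_zero h1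
  rcases lt_trichotomy k0 k1 with hlt | heq | hgt
  · -- k1 > k0 : reflect at vertex 1 (apply `reflect` to swapped data)
    have hE0s : X1 * Y1 - Y0 * X0 + (l1:ℂ) • 1
        = (0 : Matrix (Fin k1) (Fin 0) ℂ) * (0 : Matrix (Fin 0) (Fin k1) ℂ) := by
      rw [mul_empty]; exact hE1
    obtain ⟨r, hr, X0', X1', Y0', Y1', F0', G0', hE0', hE1'⟩ :=
      reflect k1 k0 0 1 l1 l0 hl1 X1 X0 Y1 Y0 0 0 F G hE0s hE0
    -- hE0' : X0' * Y0' - Y1' * X1' + ((-l1:ℤ):ℂ) • 1 = F0' * G0'  (empty framing)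
    -- hE1' : X1' * Y1' - Y0' * X0' + ((l0 + 2*l1:ℤ):ℂ) • 1 = F * G
    have hE1'' : X0' * Y0' - Y1' * X1' + (((-l1 : ℤ)):ℂ) • 1 = 0 := by
      rw [hE0', mul_empty]
    have hrlt : k0 + r < m := by omega
    have hineq := IH (k0 + r) hrlt k0 r rfl (l0 + 2*l1) (-l1)
      (h0.add_even (even_two_mul l1)) h1.neg
      X1' X0' Y1' Y0' F G hE1' hE1''
    have hz : (r : ℤ) = 2 * (k0:ℤ) - (k1:ℤ) := by
      have : (r:ℤ) + (k1:ℤ) = 2*(k0:ℤ) + 0 := by exact_mod_cast hr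
      omega
    calc ((k0:ℤ) - (k1:ℤ))^2 = ((k0:ℤ) - (r:ℤ))^2 := by rw [hz]; ring
      _ ≤ (k0:ℤ) := hineq
  · subst heq; simp
  · -- k0 > k1 : reflect at vertex 0
    have hE1s : X1 * Y1 - Y0 * X0 + (l1:ℂ) • 1
        = (0 : Matrix (Fin k1) (Fin 0) ℂ) * (0 : Matrix (Fin 0) (Fin k1) ℂ) := by
      rw [mul_empty]; exact hE1
    obtain ⟨r, hr, X0', X1', Y0', Y1', F0', G0', hE0', hE1'⟩ :=
      reflect k0 k1 1 0 l0 l1 hl0 X0 X1 Y0 Y1 F G 0 0 hE0 hE1s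
    have hE1'' : X1' * Y1' - Y0' * X0' + (((l1 + 2*l0 : ℤ)):ℂ) • 1 = 0 := by
      rw [hE1', mul_empty]
    have hrlt : r + k1 < m := by omega
    have hineq := IH (r + k1) hrlt r k1 rfl (-l0) (l1 + 2*l0)
      h0.neg (h1.add_even (even_two_mul l0))
      X0' X1' Y0' Y1' F0' G0' hE0' hE1''
    have hz : (r : ℤ) = 2 * (k1:ℤ) + 1 - (k0:ℤ) := by
      have : (r:ℤ) + (k0:ℤ) = 2*(k1:ℤ) + 1 := by exact_mod_cast hr
      omega
    have e1 : ((r:ℤ) - (k1:ℤ))^2 = ((k0:ℤ) - (k1:ℤ))^2 - 2*((k0:ℤ) - (k1:ℤ)) + 1 := by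
      rw [hz]; ring
    have e2 : (r:ℤ) = (k0:ℤ) - 2*((k0:ℤ) - (k1:ℤ)) + 1 := by rw [hz]; ring
    nlinarith [hineq]


end Stmt5Aux

open Stmt5Aux in
/-- For `m = 2`, the variety `D^n_{(k₀,k₁)}` is nonempty only if
`k_n - (k₀ - k₁)² ≥ 0`. -/
theorem stmt_5 (k0 k1 : ℕ) (n : Fin 2)
    (X0 : Matrix (Fin k0) (Fin k1) ℂ) (X1 : Matrix (Fin k1) (Fin k0) ℂ)
    (Y0 : Matrix (Fin k1) (Fin k0) ℂ) (Y1 : Matrix (Fin k0) (Fin k1) ℂ)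
    (h : if n = 0 then
        ∃ i j : Fin k0 → ℂ,
          X0 * Y0 - Y1 * X1 + 1 = Matrix.vecMulVec i j ∧
          X1 * Y1 - Y0 * X0 + 1 = 0
      else
        ∃ i j : Fin k1 → ℂ,
          X1 * Y1 - Y0 * X0 + 1 = Matrix.vecMulVec i j ∧
          X0 * Y0 - Y1 * X1 + 1 = 0) :
    ((k0 : ℤ) - (k1 : ℤ)) ^ 2 ≤ (if n = 0 then (k0 : ℤ) else (k1 : ℤ)) := by
  by_cases hn : n = 0
  · simp only [hn, if_pos] at h ⊢
    obtain ⟨i, j, h1, h2⟩ := h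
    have hFG : Matrix.vecMulVec i j
        = (Matrix.of fun a (_ : Fin 1) => i a) * (Matrix.of fun (_ : Fin 1) b => j b) := by
      ext a b
      simp [Matrix.vecMulVec_apply, Matrix.mul_apply]
    have hone : ((1:ℤ):ℂ) • (1 : Matrix (Fin k0) (Fin k0) ℂ) = 1 := by norm_num
    have hone' : ((1:ℤ):ℂ) • (1 : Matrix (Fin k1) (Fin k1) ℂ) = 1 := by norm_num
    refine key (k0 + k1) k0 k1 rfl 1 1 (odd_one) (odd_one) X0 X1 Y0 Y1
      (Matrix.of fun a (_ : Fin 1) => i a) (Matrix.of fun (_ : Fin 1) b => j b) ?_ ?_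
    · rw [hone, h1, hFG]
    · rw [hone']; exact h2
  · simp only [hn, if_neg, if_false] at h ⊢
    obtain ⟨i, j, h1, h2⟩ := h
    have hFG : Matrix.vecMulVec i j
        = (Matrix.of fun a (_ : Fin 1) => i a) * (Matrix.of fun (_ : Fin 1) b => j b) := by
      ext a b
      simp [Matrix.vecMulVec_apply, Matrix.mul_apply]
    have hone : ((1:ℤ):ℂ) • (1 : Matrix (Fin k1) (Fin k1) ℂ) = 1 := by norm_num
    have hone' : ((1:ℤ):ℂ) • (1 : Matrix (Fin k0) (Fin k0) ℂ) = 1 := by norm_num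
    have := key (k1 + k0) k1 k0 rfl 1 1 (odd_one) (odd_one) X1 X0 Y1 Y0
      (Matrix.of fun a (_ : Fin 1) => i a) (Matrix.of fun (_ : Fin 1) b => j b)
      (by rw [hone, h1, hFG]) (by rw [hone']; exact h2)
    nlinarith [this]
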